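/- arXiv:2008.11129 — 5 statements merged into one kernel-verified Lean document; each statement's English description precedes it below -/
import Mathlib

section
/- Suppose σ = σ_1 σ_2 ⋯ σ_h in S_k with |σ| = |σ_1| + |σ_2| + ⋯ + |σ_h| and each σ_i ≠ 1. Then each σ_i lies in the Young subgroup Y_σ of permutations preserving the partition of {1,...,k} into the supports of the cycles of σ (i.e., every cycle of each σ_i has its support contained in the support of a single cycle of σ). -/
/-- The number of cycles of a permutation of `Fin k`, counting fixed points. -/
def cycles {k : ℕ} (σ : Equiv.Perm (Fin k)) : ℕ :=
  σ.cycleType.card + (k - σ.support.card)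

/-- The length `|σ| := k - c(σ)`. -/
def len {k : ℕ} (σ : Equiv.Perm (Fin k)) : ℕ := k - cycles σ

open Equiv Equiv.Perm

namespace YoungAux

variable {k : ℕ}

lemma zpow_mod_period {α : Type*} (σ : Equiv.Perm α) {x : α} {p : ℕ} (hp : 0 < p)
    (hx : (σ ^ p) x = x) (i : ℤ) : (σ ^ i) x = (σ ^ (i % (p : ℤ)).toNat) x := by
  have hfix : ∀ d : ℤ, ((σ ^ (p : ℤ)) ^ d) x = x := fun d =>
    Function.IsFixedPt.perm_zpow (show (σ ^ (p:ℤ)) x = x by rw [zpow_natCast]; exact hx) d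
  have hp' : (p : ℤ) ≠ 0 := by exact_mod_cast hp.ne'
  have h1 : σ ^ i = σ ^ (i % (p:ℤ)) * (σ ^ (p : ℤ)) ^ (i / (p:ℤ)) := by
    rw [← zpow_mul, ← zpow_add, Int.emod_add_mul_ediv]
  rw [h1, Equiv.Perm.mul_apply, hfix]
  congr 1
  rw [← zpow_natCast]
  congr 1
  exact (Int.toNat_of_nonneg (Int.emod_nonneg i hp')).symm

lemma exists_minimal_period (σ : Equiv.Perm (Fin k)) (x : Fin k) :
    ∃ n : ℕ, 0 < n ∧ (σ ^ n) x = x ∧ ∀ m, 0 < m → m < n → (σ ^ m) x ≠ x := by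
  have hex : ∃ n, 0 < n ∧ (σ ^ n) x = x :=
    ⟨orderOf σ, orderOf_pos σ, by rw [pow_orderOf_eq_one]; rfl⟩
  classical
  exact ⟨Nat.find hex, (Nat.find_spec hex).1, (Nat.find_spec hex).2,
    fun m hm hmn h => Nat.find_min hex hmn ⟨hm, h⟩⟩

lemma key_merge {σ : Equiv.Perm (Fin k)} {a b : Fin k} (hab : a ≠ b)
    (h : ¬ σ.SameCycle a b) : (Equiv.swap a b * σ).SameCycle a b := by
  obtain ⟨n, hn0, hna, hmin⟩ := exists_minimal_period σ a
  set g := Equiv.swap a b * σ with hg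
  have haux : ∀ j, j < n → (g ^ j) a = (σ ^ j) a := by
    intro j hj
    induction j with
    | zero => simp
    | succ i ih =>
      have h1 : (σ ^ (i + 1)) a ≠ a := hmin (i + 1) (by omega) hj
      have h2 : (σ ^ (i + 1)) a ≠ b := fun hb => h ⟨((i + 1 : ℕ) : ℤ), by rw [zpow_natCast]; exact hb⟩
      calc (g ^ (i + 1)) a = g ((g ^ i) a) := by rw [pow_succ']; rfl
        _ = Equiv.swap a b (σ ((σ ^ i) a)) := by rw [ih (by omega)]; rfl
        _ = Equiv.swap a b ((σ ^ (i + 1)) a) := by rw [pow_succ']; rfl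
        _ = (σ ^ (i + 1)) a := Equiv.swap_apply_of_ne_of_ne h1 h2
  obtain ⟨m, rfl⟩ : ∃ m, n = m + 1 := ⟨n - 1, by omega⟩
  have hfin : (g ^ (m + 1)) a = b := by
    calc (g ^ (m + 1)) a = g ((g ^ m) a) := by rw [pow_succ']; rfl
      _ = Equiv.swap a b (σ ((σ ^ m) a)) := by rw [haux m (by omega)]; rfl
      _ = Equiv.swap a b ((σ ^ (m + 1)) a) := by rw [pow_succ']; rfl
      _ = Equiv.swap a b a := by rw [hna]
      _ = b := Equiv.swap_apply_left a b
  exact ⟨((m + 1 : ℕ) : ℤ), by rw [zpow_natCast]; exact hfin⟩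

lemma key_split {σ : Equiv.Perm (Fin k)} {a b : Fin k} (hab : a ≠ b)
    (h : σ.SameCycle a b) : ¬ (Equiv.swap a b * σ).SameCycle a b := by
  obtain ⟨n, hn0, hna, hmin⟩ := exists_minimal_period σ a
  obtain ⟨i, hi⟩ := h
  have hmred := zpow_mod_period σ hn0 hna i
  set m := (i % (n : ℤ)).toNat with hm
  have hmb : (σ ^ m) a = b := by rw [← hmred]; exact hi
  have hn' : (0 : ℤ) < (n : ℤ) := by exact_mod_cast hn0
  have hmn : m < n := by
    have h1 := Int.emod_lt_of_pos i hn'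
    have h2 := Int.emod_nonneg i hn'.ne'
    omega
  have hm0 : 0 < m := by
    rcases Nat.eq_zero_or_pos m with h0 | h0
    · exfalso; apply hab; rw [← hmb, h0, pow_zero]; rfl
    · exact h0
  set g := Equiv.swap a b * σ with hg
  have haux : ∀ j, j < n - m → (g ^ j) b = (σ ^ (m + j)) a := by
    intro j hj
    induction j with
    | zero => simpa using hmb.symm
    | succ i' ih =>
      have h1 : (σ ^ (m + i' + 1)) a ≠ a := hmin (m + i' + 1) (by omega) (by omega)
      have h2 : (σ ^ (m + i' + 1)) a ≠ b := by
        intro heq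
        have e1 : (σ ^ (m + i' + 1)) a = (σ ^ (i' + 1)) b := by
          rw [← hmb, ← Equiv.Perm.mul_apply, ← pow_add]
          congr 2
          omega
        have hb1 : (σ ^ (i' + 1)) b = b := by rw [← e1, heq]
        have e2 : (σ ^ m) ((σ ^ (i' + 1)) a) = (σ ^ m) a := by
          rw [← Equiv.Perm.mul_apply, ← pow_add, show m + (i' + 1) = (i' + 1) + m by omega,
            pow_add, Equiv.Perm.mul_apply, hmb, hb1]
        exact hmin (i' + 1) (by omega) (by omega) ((Equiv.injective _) e2)
      calc (g ^ (i' + 1)) b = g ((g ^ i') b) := by rw [pow_succ']; rfl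
        _ = Equiv.swap a b (σ ((σ ^ (m + i')) a)) := by rw [ih (by omega)]; rfl
        _ = Equiv.swap a b ((σ ^ (m + i' + 1)) a) := by rw [pow_succ' σ (m + i')]; rfl
        _ = (σ ^ (m + (i' + 1))) a := by
            rw [show m + (i' + 1) = m + i' + 1 by omega]
            exact Equiv.swap_apply_of_ne_of_ne h1 h2
  have hper : (g ^ (n - m)) b = b := by
    obtain ⟨q, hq⟩ : ∃ q, n - m = q + 1 := ⟨n - m - 1, by omega⟩
    rw [hq, pow_succ', Equiv.Perm.mul_apply, haux q (by omega)]
    have e3 : σ ((σ ^ (m + q)) a) = a := by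
      rw [← Equiv.Perm.mul_apply, ← pow_succ', show m + q + 1 = n by omega, hna]
    show Equiv.swap a b (σ ((σ ^ (m + q)) a)) = b
    rw [e3, Equiv.swap_apply_left]
  intro hgab
  obtain ⟨i2, hi2⟩ := hgab.symm
  have hr := zpow_mod_period g (show 0 < n - m by omega) hper i2
  set r := (i2 % ((n - m : ℕ) : ℤ)).toNat with hrdef
  have hnm' : (0 : ℤ) < ((n - m : ℕ) : ℤ) := by exact_mod_cast (show 0 < n - m by omega)
  have hrlt : r < n - m := by
    have h1 := Int.emod_lt_of_pos i2 hnm'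
    have h2 := Int.emod_nonneg i2 hnm'.ne'
    omega
  have hfix : (σ ^ (m + r)) a = a := by rw [← haux r hrlt, ← hr, hi2]
  exact hmin (m + r) (by omega) (by omega) hfix

lemma sameCycle_of_invariant {g : Equiv.Perm (Fin k)} {r : Fin k → Fin k → Prop}
    (hsymm : ∀ {x y}, r x y → r y x) (htrans : ∀ {x y z}, r x y → r y z → r x z)
    (hrefl : ∀ x, r x x) (hinv : ∀ z, r z (g z)) {x y : Fin k}
    (hxy : g.SameCycle x y) : r x y := by
  obtain ⟨i, hlt, rfl⟩ := hxy.exists_pow_eq'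
  clear hlt hxy
  induction i with
  | zero => simpa using hrefl x
  | succ j ih =>
    have : (g ^ (j + 1)) x = g ((g ^ j) x) := by rw [pow_succ']; rfl
    rw [this]
    exact htrans ih (hinv _)

lemma merge_incl {σ : Equiv.Perm (Fin k)} {a b : Fin k} (hab : a ≠ b)
    (h : ¬ σ.SameCycle a b) {x y : Fin k} (hxy : σ.SameCycle x y) :
    (Equiv.swap a b * σ).SameCycle x y := by
  have hkey := key_merge hab h
  set g := Equiv.swap a b * σ with hg
  refine sameCycle_of_invariant (fun h => h.symm) (fun h1 h2 => h1.trans h2)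
    (fun x => SameCycle.refl _ _) ?_ hxy
  intro z
  have hz : g z = Equiv.swap a b (σ z) := rfl
  rcases eq_or_ne (σ z) a with h1 | h1
  · have hzb : g.SameCycle z b := ⟨1, by rw [zpow_one, hz, h1, Equiv.swap_apply_left]⟩
    rw [h1]
    exact hzb.trans hkey.symm
  rcases eq_or_ne (σ z) b with h2 | h2
  · have hza : g.SameCycle z a := ⟨1, by rw [zpow_one, hz, h2, Equiv.swap_apply_right]⟩
    rw [h2]
    exact hza.trans hkey
  · exact ⟨1, by rw [zpow_one, hz, Equiv.swap_apply_of_ne_of_ne h1 h2]⟩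

lemma split_incl {σ : Equiv.Perm (Fin k)} {a b : Fin k} (h : σ.SameCycle a b)
    {x y : Fin k} (hxy : (Equiv.swap a b * σ).SameCycle x y) : σ.SameCycle x y := by
  refine sameCycle_of_invariant (fun h => h.symm) (fun h1 h2 => h1.trans h2)
    (fun x => SameCycle.refl _ _) ?_ hxy
  intro z
  show σ.SameCycle z (Equiv.swap a b (σ z))
  have hz1 : σ.SameCycle z (σ z) := ⟨1, by rw [zpow_one]⟩
  rcases eq_or_ne (σ z) a with h1 | h1
  · rw [h1, Equiv.swap_apply_left]
    exact (h1 ▸ hz1).trans h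
  rcases eq_or_ne (σ z) b with h2 | h2
  · rw [h2, Equiv.swap_apply_right]
    exact (h2 ▸ hz1).trans h.symm
  · rw [Equiv.swap_apply_of_ne_of_ne h1 h2]
    exact hz1

lemma merge_rev {σ : Equiv.Perm (Fin k)} {a b : Fin k} {x y : Fin k}
    (hxy : (Equiv.swap a b * σ).SameCycle x y) :
    σ.SameCycle x y ∨ ((σ.SameCycle x a ∨ σ.SameCycle x b) ∧ (σ.SameCycle y a ∨ σ.SameCycle y b)) := by
  refine sameCycle_of_invariant (r := fun x y => σ.SameCycle x y ∨
    ((σ.SameCycle x a ∨ σ.SameCycle x b) ∧ (σ.SameCycle y a ∨ σ.SameCycle y b)))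
    ?_ ?_ ?_ ?_ hxy
  · rintro x y (h | ⟨hx, hy⟩)
    · exact Or.inl h.symm
    · exact Or.inr ⟨hy, hx⟩
  · rintro x y z (h1 | ⟨hx, hy⟩) (h2 | ⟨hy', hz⟩)
    · exact Or.inl (h1.trans h2)
    · exact Or.inr ⟨hy'.imp h1.trans h1.trans, hz⟩
    · exact Or.inr ⟨hx, hy.imp (fun hy2 => h2.symm.trans hy2) (fun hy2 => h2.symm.trans hy2)⟩
    · exact Or.inr ⟨hx, hz⟩
  · exact fun x => Or.inl (SameCycle.refl _ _)
  · intro z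
    have hz : (Equiv.swap a b * σ) z = Equiv.swap a b (σ z) := rfl
    have hz1 : σ.SameCycle z (σ z) := ⟨1, by rw [zpow_one]⟩
    rcases eq_or_ne (σ z) a with h1 | h1
    · rw [hz, h1, Equiv.swap_apply_left]
      exact Or.inr ⟨Or.inl (h1 ▸ hz1), Or.inr (SameCycle.refl _ _)⟩
    rcases eq_or_ne (σ z) b with h2 | h2
    · rw [hz, h2, Equiv.swap_apply_right]
      exact Or.inr ⟨Or.inr (h2 ▸ hz1), Or.inl (SameCycle.refl _ _)⟩
    · rw [hz, Equiv.swap_apply_of_ne_of_ne h1 h2]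
      exact Or.inl hz1


/-- The setoid of the same-cycle relation. -/
def scSetoid (σ : Equiv.Perm (Fin k)) : Setoid (Fin k) :=
  ⟨σ.SameCycle, ⟨fun x => SameCycle.refl σ x, fun h => h.symm, fun h1 h2 => h1.trans h2⟩⟩

lemma cycles_eq (σ : Equiv.Perm (Fin k)) :
    cycles σ = Nat.card (Quotient (scSetoid σ)) := by
  classical
  have hsc : ∀ {x y : Fin k}, σ.SameCycle x y → x ∉ σ.support → y = x := by
    rintro x y ⟨i, hi⟩ hx
    rw [Equiv.Perm.notMem_support] at hx
    rw [← hi]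
    exact Function.IsFixedPt.perm_zpow hx i
  set φ : Fin k → {c // c ∈ σ.cycleFactorsFinset} ⊕ {x // x ∈ σ.supportᶜ} := fun x =>
    if h : x ∈ σ.support then Sum.inl ⟨σ.cycleOf x, cycleOf_mem_cycleFactorsFinset_iff.2 h⟩
    else Sum.inr ⟨x, Finset.mem_compl.2 h⟩ with hφ
  have hwd : ∀ x y, σ.SameCycle x y → φ x = φ y := by
    intro x y hxy
    by_cases hx : x ∈ σ.support
    · have hy : y ∈ σ.support := by
        by_contra hy
        exact hy ((hsc hxy.symm hy) ▸ hx)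
      simp only [hφ, dif_pos hx, dif_pos hy]
      exact congrArg Sum.inl (Subtype.ext hxy.cycleOf_eq)
    · rw [hsc hxy hx]
  set f : Quotient (scSetoid σ) → {c // c ∈ σ.cycleFactorsFinset} ⊕ {x // x ∈ σ.supportᶜ} :=
    Quotient.lift φ hwd with hf
  have hbij : Function.Bijective f := by
    constructor
    · intro u v
      induction u using Quotient.inductionOn with | _ x =>
      induction v using Quotient.inductionOn with | _ y =>
      intro huv
      have huv' : φ x = φ y := huv
      apply Quotient.sound
      show σ.SameCycle x y
      simp only [hφ] at huv'
      by_cases hx : x ∈ σ.support <;> by_cases hy : y ∈ σ.support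
      · rw [dif_pos hx, dif_pos hy] at huv'
        have hcyc : σ.cycleOf x = σ.cycleOf y := by simpa using huv'
        have hx2 : x ∈ (σ.cycleOf y).support := by
          rw [← hcyc]
          exact mem_support_cycleOf_iff.2 ⟨SameCycle.refl σ x, hx⟩
        exact ((mem_support_cycleOf_iff.1 hx2).1).symm
      · rw [dif_pos hx, dif_neg hy] at huv'
        exact absurd huv' (by simp)
      · rw [dif_neg hx, dif_pos hy] at huv'
        exact absurd huv' (by simp)
      · rw [dif_neg hx, dif_neg hy] at huv'
        have hxy2 : x = y := by simpa using huv'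
        rw [hxy2]
    · rintro (⟨c, hc⟩ | ⟨x, hx⟩)
      · obtain ⟨x, hx1, -⟩ := (mem_cycleFactorsFinset_iff.1 hc).1
        have hxc : x ∈ c.support := mem_support.2 hx1
        have hxσ : x ∈ σ.support := mem_cycleFactorsFinset_support_le hc hxc
        refine ⟨⟦x⟧, ?_⟩
        simp only [hf, hφ, Quotient.lift_mk, dif_pos hxσ]
        exact congrArg Sum.inl (Subtype.ext (cycle_is_cycleOf hxc hc).symm)
      · refine ⟨⟦x⟧, ?_⟩
        have hx' : x ∉ σ.support := Finset.mem_compl.1 hx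
        simp only [hf, hφ, Quotient.lift_mk, dif_neg hx']
  have hcard := Nat.card_eq_of_bijective f hbij
  rw [hcard]
  have h1 : Nat.card ({c // c ∈ σ.cycleFactorsFinset} ⊕ {x // x ∈ σ.supportᶜ}) =
      σ.cycleFactorsFinset.card + σ.supportᶜ.card := by
    rw [Nat.card_eq_fintype_card, Fintype.card_sum, Fintype.card_coe, Fintype.card_coe]
  rw [h1]
  have h2 : σ.cycleType.card = σ.cycleFactorsFinset.card := by
    rw [cycleType_def, Multiset.card_map]
    rfl
  have h3 : σ.supportᶜ.card = k - σ.support.card := by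
    rw [Finset.card_compl, Fintype.card_fin]
  rw [cycles, h2, h3]

lemma cycles_swap_mul_lt {σ : Equiv.Perm (Fin k)} {a b : Fin k} (hab : a ≠ b)
    (h : σ.SameCycle a b) : cycles σ < cycles (Equiv.swap a b * σ) := by
  classical
  rw [cycles_eq, cycles_eq]
  set g := Equiv.swap a b * σ with hg
  set f : Quotient (scSetoid g) → Quotient (scSetoid σ) :=
    Quotient.lift (fun x => (⟦x⟧ : Quotient (scSetoid σ)))
      (fun x y hxy => Quotient.sound (split_incl h hxy)) with hf
  have hsurj : Function.Surjective f := by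
    intro u
    induction u using Quotient.inductionOn with | _ x =>
    exact ⟨⟦x⟧, rfl⟩
  have hninj : ¬ Function.Injective f := by
    intro hinj
    have h2 : (⟦a⟧ : Quotient (scSetoid g)) = ⟦b⟧ := hinj (Quotient.sound h)
    exact key_split hab h (Quotient.exact h2)
  have := Fintype.card_lt_of_surjective_not_injective f hsurj hninj
  simpa [Nat.card_eq_fintype_card] using this

lemma cycles_le_succ_swap_mul {σ : Equiv.Perm (Fin k)} {a b : Fin k} (hab : a ≠ b) :
    cycles σ ≤ cycles (Equiv.swap a b * σ) + 1 := by
  classical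
  by_cases h : σ.SameCycle a b
  · exact (cycles_swap_mul_lt hab h).le.trans (Nat.le_succ _)
  · rw [cycles_eq, cycles_eq]
    set g := Equiv.swap a b * σ with hg
    set f : Quotient (scSetoid σ) → Quotient (scSetoid g) :=
      Quotient.lift (fun x => (⟦x⟧ : Quotient (scSetoid g)))
        (fun x y hxy => Quotient.sound (merge_incl hab h hxy)) with hf
    set F : Quotient (scSetoid σ) → Quotient (scSetoid g) ⊕ Unit := fun u =>
      if u = ⟦b⟧ then Sum.inr () else Sum.inl (f u) with hF
    have hFinj : Function.Injective F := by
      intro u v huv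
      by_cases hu : u = ⟦b⟧ <;> by_cases hv : v = ⟦b⟧ <;>
        simp only [hF, if_pos, if_neg, hu, hv] at huv
      · rw [hu, hv]
      · exact absurd huv (by simp)
      · exact absurd huv (by simp)
      · have hfueq : f u = f v := Sum.inl.inj huv
        obtain ⟨x, rfl⟩ := Quotient.exists_rep u
        obtain ⟨y, rfl⟩ := Quotient.exists_rep v
        have hxy : g.SameCycle x y := Quotient.exact hfueq
        rcases merge_rev hxy with hcase | ⟨hx, hy⟩
        · exact Quotient.sound hcase
        · have hx' : σ.SameCycle x a := hx.resolve_right (fun hb => hu (Quotient.sound hb))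
          have hy' : σ.SameCycle y a := hy.resolve_right (fun hb => hv (Quotient.sound hb))
          exact Quotient.sound (hx'.trans hy'.symm)
    have hle := Fintype.card_le_of_injective F hFinj
    rw [Fintype.card_sum] at hle
    simp only [Nat.card_eq_fintype_card]
    simpa using hle

lemma cycles_le (σ : Equiv.Perm (Fin k)) : cycles σ ≤ k := by
  have h1 : σ.cycleType.sum = σ.support.card := sum_cycleType σ
  have h2 := Multiset.card_nsmul_le_sum (s := σ.cycleType) (a := 2)
    (fun x hx => two_le_of_mem_cycleType hx)
  rw [smul_eq_mul] at h2
  have h3 := Finset.card_le_card (Finset.subset_univ σ.support)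
  rw [Finset.card_univ, Fintype.card_fin] at h3
  rw [cycles]
  omega

lemma cycles_lt (σ : Equiv.Perm (Fin k)) (h : σ ≠ 1) : cycles σ < k := by
  have h1 : σ.cycleType.sum = σ.support.card := sum_cycleType σ
  have h2 := Multiset.card_nsmul_le_sum (s := σ.cycleType) (a := 2)
    (fun x hx => two_le_of_mem_cycleType hx)
  rw [smul_eq_mul] at h2
  have h3 := Finset.card_le_card (Finset.subset_univ σ.support)
  rw [Finset.card_univ, Fintype.card_fin] at h3
  have h4 : 0 < σ.cycleType.card := card_cycleType_pos.2 h
  rw [cycles]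
  omega

lemma len_one : len (1 : Equiv.Perm (Fin k)) = 0 := by
  rw [len, cycles]
  simp


lemma exists_swap_list_aux :
    ∀ n (τ : Equiv.Perm (Fin k)), τ.support.card = n →
      ∃ L : List (Equiv.Perm (Fin k)),
        (∀ t ∈ L, ∃ a b : Fin k, a ≠ b ∧ t = Equiv.swap a b) ∧ L.prod = τ ∧ L.length ≤ len τ := by
  intro n
  induction n using Nat.strong_induction_on with
  | _ n ih =>
  intro τ hn
  by_cases h1 : τ = 1
  · exact ⟨[], by simp, by simp [h1], by simp⟩
  · have hx : ∃ x, τ x ≠ x := by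
      by_contra hc
      push_neg at hc
      exact h1 (Equiv.ext hc)
    obtain ⟨x, hx⟩ := hx
    have hcard := Equiv.Perm.card_support_swap_mul hx
    obtain ⟨L', hL'1, hL'2, hL'3⟩ :=
      ih (Equiv.swap x (τ x) * τ).support.card (hn ▸ hcard) (Equiv.swap x (τ x) * τ) rfl
    refine ⟨Equiv.swap x (τ x) :: L', ?_, ?_, ?_⟩
    · intro t ht
      rcases List.mem_cons.1 ht with rfl | ht'
      · exact ⟨x, τ x, fun h => hx h.symm, rfl⟩
      · exact hL'1 t ht'
    · rw [List.prod_cons, hL'2, ← mul_assoc, Equiv.swap_mul_self, one_mul]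
    · have hlt : cycles τ < cycles (Equiv.swap x (τ x) * τ) :=
        cycles_swap_mul_lt (fun h => hx h.symm) ⟨1, by rw [zpow_one]⟩
      have h2 := cycles_le (Equiv.swap x (τ x) * τ)
      have h3 := cycles_lt τ h1
      simp only [List.length_cons]
      rw [len] at hL'3 ⊢
      omega

lemma exists_swap_list (τ : Equiv.Perm (Fin k)) :
    ∃ L : List (Equiv.Perm (Fin k)),
      (∀ t ∈ L, ∃ a b : Fin k, a ≠ b ∧ t = Equiv.swap a b) ∧ L.prod = τ ∧ L.length ≤ len τ :=
  exists_swap_list_aux τ.support.card τ rfl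

lemma len_prod_le (L : List (Equiv.Perm (Fin k)))
    (hL : ∀ t ∈ L, ∃ a b : Fin k, a ≠ b ∧ t = Equiv.swap a b) :
    len L.prod ≤ L.length := by
  induction L with
  | nil => simp [len_one]
  | cons t L' ih =>
    obtain ⟨a, b, hab, rfl⟩ := hL t (List.mem_cons_self)
    have h1 := cycles_le_succ_swap_mul (σ := L'.prod) hab
    have h2 := ih (fun t ht => hL t (List.mem_cons_of_mem _ ht))
    have h3 := cycles_le L'.prod
    simp only [List.prod_cons, List.length_cons]
    rw [len] at h2 ⊢
    omega

lemma geodesic (L : List (Equiv.Perm (Fin k)))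
    (hL : ∀ t ∈ L, ∃ a b : Fin k, a ≠ b ∧ t = Equiv.swap a b)
    (hlen : len L.prod = L.length) :
    ∀ t ∈ L, ∀ x, L.prod.SameCycle x (t x) := by
  induction L with
  | nil => intro t ht; cases ht
  | cons t0 L' ih =>
    obtain ⟨a, b, hab, rfl⟩ := hL t0 (List.mem_cons_self)
    simp only [List.prod_cons, List.length_cons] at hlen ⊢
    have hLtail : ∀ t ∈ L', ∃ a b : Fin k, a ≠ b ∧ t = Equiv.swap a b :=
      fun t ht => hL t (List.mem_cons_of_mem _ ht)
    have hB := len_prod_le L' hLtail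
    have hcy1 := cycles_le (Equiv.swap a b * L'.prod)
    have hcy2 := cycles_le L'.prod
    have hnsc : ¬ L'.prod.SameCycle a b := by
      intro hsc
      have hlt := cycles_swap_mul_lt hab hsc
      rw [len] at hlen hB
      omega
    have hkey : (Equiv.swap a b * L'.prod).SameCycle a b := key_merge hab hnsc
    have hlen' : len L'.prod = L'.length := by
      have hle := cycles_le_succ_swap_mul (σ := L'.prod) hab
      rw [len] at hlen hB ⊢
      omega
    have hIH := ih hLtail hlen'
    intro t ht x
    rcases List.mem_cons.1 ht with rfl | ht'
    · rcases eq_or_ne x a with rfl | hxa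
      · rw [Equiv.swap_apply_left]
        exact hkey
      rcases eq_or_ne x b with rfl | hxb
      · rw [Equiv.swap_apply_right]
        exact hkey.symm
      · rw [Equiv.swap_apply_of_ne_of_ne hxa hxb]
    · exact merge_incl hab hnsc (hIH t ht' x)

lemma prod_sameCycle (σ : Equiv.Perm (Fin k)) :
    ∀ (L : List (Equiv.Perm (Fin k))), (∀ t ∈ L, ∀ z, σ.SameCycle z (t z)) →
      ∀ x, σ.SameCycle x (L.prod x) := by
  intro L
  induction L with
  | nil => intro _ x; simpa using SameCycle.refl σ x
  | cons t L' ihL =>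
    intro hL x
    have h1 := ihL (fun t ht => hL t (List.mem_cons_of_mem _ ht)) x
    have h2 := hL t (List.mem_cons_self) (L'.prod x)
    rw [List.prod_cons]
    simpa using h1.trans h2

end YoungAux


open YoungAux in
/-- If `σ = σ_1 ⋯ σ_h` with `|σ| = |σ_1| + ⋯ + |σ_h|` and each `σ_i ≠ 1`,
then each `σ_i` lies in the Young subgroup `Y_σ` preserving each orbit of
`σ`, i.e. every `σ_i` maps each point into the `σ`-cycle containing it. -/
theorem factors_mem_youngSubgroup {k : ℕ} (σ : Equiv.Perm (Fin k))
    (l : List (Equiv.Perm (Fin k)))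
    (hne : ∀ τ ∈ l, τ ≠ 1)
    (hprod : l.prod = σ)
    (hlen : len σ = (l.map len).sum) :
    ∀ τ ∈ l, ∀ x : Fin k, σ.SameCycle x (τ x) := by
  classical
  choose F hF1 hF2 hF3 using (exists_swap_list (k := k))
  set M : List (Equiv.Perm (Fin k)) := (l.map F).flatten with hM
  have hMswap : ∀ t ∈ M, ∃ a b : Fin k, a ≠ b ∧ t = Equiv.swap a b := by
    intro t ht
    rw [hM, List.mem_flatten] at ht
    obtain ⟨L, hL, htL⟩ := ht
    rw [List.mem_map] at hL
    obtain ⟨τ, hτ, rfl⟩ := hL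
    exact hF1 τ t htL
  have hMprod : M.prod = σ := by
    rw [hM, List.prod_flatten, List.map_map]
    rw [show List.prod ∘ F = id from funext hF2, List.map_id, hprod]
  have hMlen : M.length ≤ len σ := by
    rw [hM, List.length_flatten, List.map_map]
    calc (l.map (List.length ∘ F)).sum ≤ (l.map len).sum :=
          List.sum_le_sum (fun τ _ => hF3 τ)
      _ = len σ := hlen.symm
  have hBB : len σ ≤ M.length := by
    have := len_prod_le M hMswap
    rwa [hMprod] at this
  have hgeo := geodesic M hMswap (by rw [hMprod]; omega)
  rw [hMprod] at hgeo
  intro τ hτ x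
  have hτmem : F τ ∈ l.map F := List.mem_map_of_mem hτ
  have hsub : ∀ t ∈ F τ, ∀ z, σ.SameCycle z (t z) := fun t ht z =>
    hgeo t (List.mem_flatten.2 ⟨F τ, hτmem, ht⟩) z
  have := prod_sameCycle σ (F τ) hsub x
  rwa [hF2 τ] at this
end

section
/- In the group algebra Q[S_k][d] (d a commuting variable, or a scalar), the identity Σ_{ρ∈S_k} d^{c(ρ)} ρ = d·∏_{i=2}^{k} (d + J_i) holds, where J_i are the Jucys–Murphy elements. -/
open Equiv Equiv.Perm Finset

/-- The Jucys–Murphy element `J_i = ∑_{j < i} (j,i)` in `ℚ[S_k]`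
(with `J_i = 0` when `i` is the least index). -/
noncomputable def JM (k : ℕ) (i : Fin k) : MonoidAlgebra ℚ (Equiv.Perm (Fin k)) :=
  ∑ j ∈ Finset.univ.filter (fun j : Fin k => j < i),
    MonoidAlgebra.of ℚ (Equiv.Perm (Fin k)) (Equiv.swap j i)

lemma isCycle_mul_swap {α : Type*} [DecidableEq α] [Fintype α] {c : Perm α}
    (hc : c.IsCycle) {a b : α} (ha : c a ≠ a) (hb : c b = b) (hab : a ≠ b) :
    IsCycle (c * Equiv.swap a b) := by
  set f := c * Equiv.swap a b with hf
  have h1 : f a = b := by simp [hf, Equiv.swap_apply_left, hb]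
  have h2 : f b = c a := by simp [hf, Equiv.swap_apply_right]
  have h3 : ∀ x, x ≠ a → x ≠ b → f x = c x := by
    intro x hxa hxb; simp [hf, Equiv.swap_apply_of_ne_of_ne hxa hxb]
  have hsab : SameCycle f a b := ⟨1, by simpa using h1⟩
  have key : ∀ n : ℕ, SameCycle f a ((c ^ n) a) := by
    intro n; induction n with
    | zero => exact ⟨0, by simp⟩
    | succ n ih =>
      have hz : (c ^ (n + 1)) a = c ((c ^ n) a) := by
        rw [pow_succ', mul_apply]
      rw [hz]
      by_cases hza : (c ^ n) a = a
      · rw [hza, ← h2]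
        exact sameCycle_apply_right.mpr hsab
      · have hzb : (c ^ n) a ≠ b := by
          intro h
          have : (c ^ n) a ∈ c.support := pow_apply_mem_support.mpr (mem_support.mpr ha)
          rw [h, mem_support] at this; exact this hb
        rw [← h3 _ hza hzb]
        exact sameCycle_apply_right.mpr ih
  refine ⟨a, by rw [h1]; exact hab.symm, ?_⟩
  intro y hy
  by_cases hya : y = a
  · rw [hya]
  by_cases hyb : y = b
  · rw [hyb]; exact hsab
  · have hcy : c y ≠ y := by rw [← h3 y hya hyb]; exact hy
    obtain ⟨n, hn⟩ := (hc.sameCycle ha hcy).exists_pow_eq c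
    rw [← hn.2.2]; exact key n

lemma support_mul_swap {α : Type*} [DecidableEq α] [Fintype α] {ρ : Perm α}
    {a b : α} (ha : ρ a ≠ a) (hb : ρ b = b) (hab : a ≠ b) :
    (ρ * Equiv.swap a b).support = insert b ρ.support := by
  have hρab : ρ a ≠ b := fun h => hab (ρ.injective (h.trans hb.symm))
  ext x
  by_cases hxa : x = a
  · subst hxa
    simp only [mem_support, mul_apply, Equiv.swap_apply_left, hb, mem_insert]
    simp [hab.symm, hab, mem_support, ha]
  by_cases hxb : x = b
  · subst hxb
    simp only [mem_support, mul_apply, Equiv.swap_apply_right, mem_insert]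
    simp [hρab]
  · simp only [mem_support, mul_apply, Equiv.swap_apply_of_ne_of_ne hxa hxb, mem_insert]
    simp [hxb]

lemma ct_supp_mul_swap {α : Type*} [DecidableEq α] [Fintype α] (ρ : Perm α) :
    ∀ a b : α, a ≠ b → ρ b = b → ρ a ≠ a →
      Multiset.card (ρ * Equiv.swap a b).cycleType = Multiset.card ρ.cycleType ∧
      (ρ * Equiv.swap a b).support.card = ρ.support.card + 1 := by
  induction ρ using Equiv.Perm.cycle_induction_on with
  | base_one => intro a b hab hb ha; simp at ha
  | base_cycles σ hσ =>
    intro a b hab hb ha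
    constructor
    · rw [(isCycle_mul_swap hσ ha hb hab).cycleType, hσ.cycleType]; simp
    · rw [support_mul_swap ha hb hab,
        card_insert_of_notMem (Equiv.Perm.notMem_support.mpr hb)]
  | induction_disjoint σ τ hd hσc ihσ ihτ =>
    intro a b hab hb ha
    have hτb : τ b = b := by
      by_contra h
      have hσb : σ b = b := (hd b).resolve_right h
      have h2 : σ (τ b) = τ b := by
        rcases hd (τ b) with h' | h'
        · exact h'
        · exact absurd (τ.injective h') h
      apply h
      have : (σ * τ) b = τ b := by simp [mul_apply, h2]
      rw [← this, hb]
    have hσb : σ b = b := by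
      have := hb; simp only [mul_apply, hτb] at this; exact this
    by_cases hτa : τ a = a
    · have hσa : σ a ≠ a := by
        intro h; apply ha; simp [mul_apply, hτa, h]
      have hdτs : Equiv.Perm.Disjoint τ (Equiv.swap a b) := by
        intro x
        by_cases hxa : x = a
        · exact Or.inl (hxa ▸ hτa)
        by_cases hxb : x = b
        · exact Or.inl (hxb ▸ hτb)
        · exact Or.inr (Equiv.swap_apply_of_ne_of_ne hxa hxb)
      have hrw : σ * τ * Equiv.swap a b = σ * Equiv.swap a b * τ := by
        rw [mul_assoc, mul_assoc, hdτs.commute.eq]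
      have hd2 : Equiv.Perm.Disjoint (σ * Equiv.swap a b) τ := by
        intro x
        by_cases hτx : τ x = x
        · exact Or.inr hτx
        · have hσx : σ x = x := (hd x).resolve_right hτx
          have hxa : x ≠ a := fun h => hτx (h ▸ hτa)
          have hxb : x ≠ b := fun h => hτx (h ▸ hτb)
          exact Or.inl (by simp [mul_apply, Equiv.swap_apply_of_ne_of_ne hxa hxb, hσx])
      obtain ⟨ihct, ihs⟩ := ihσ a b hab hσb hσa
      constructor
      · rw [hrw, hd2.cycleType_mul, hd.cycleType_mul]
        simp [Multiset.card_add, ihct]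
      · rw [hrw, hd2.card_support_mul, hd.card_support_mul, ihs]; ring
    · have hτa' : τ a ≠ a := hτa
      have hσa : σ a = a := (hd a).resolve_right hτa'
      have hrw : σ * τ * Equiv.swap a b = σ * (τ * Equiv.swap a b) := by
        rw [mul_assoc]
      have hd2 : Equiv.Perm.Disjoint σ (τ * Equiv.swap a b) := by
        intro x
        by_cases hσx : σ x = x
        · exact Or.inl hσx
        · have hτx : τ x = x := (hd x).resolve_left hσx
          have hxa : x ≠ a := fun h => hσx (h ▸ hσa)
          have hxb : x ≠ b := fun h => hσx (h ▸ hσb)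
          exact Or.inr (by simp [mul_apply, Equiv.swap_apply_of_ne_of_ne hxa hxb, hτx])
      obtain ⟨ihct, ihs⟩ := ihτ a b hab hτb hτa'
      constructor
      · rw [hrw, hd2.cycleType_mul, hd.cycleType_mul]
        simp [Multiset.card_add, ihct]
      · rw [hrw, hd2.card_support_mul, hd.card_support_mul, ihs]; ring

lemma cycles_mul_swap {k : ℕ} (ρ : Perm (Fin k)) {a b : Fin k} (hab : a ≠ b) (hb : ρ b = b) :
    cycles (ρ * Equiv.swap a b) + 1 = cycles ρ := by
  have hle : (ρ * Equiv.swap a b).support.card ≤ k := by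
    simpa using card_le_univ (ρ * Equiv.swap a b).support
  by_cases ha : ρ a = a
  · have hd : Equiv.Perm.Disjoint ρ (Equiv.swap a b) := by
      intro x
      by_cases hxa : x = a
      · exact Or.inl (hxa ▸ ha)
      by_cases hxb : x = b
      · exact Or.inl (hxb ▸ hb)
      · exact Or.inr (Equiv.swap_apply_of_ne_of_ne hxa hxb)
    have hct : Multiset.card (ρ * Equiv.swap a b).cycleType
        = Multiset.card ρ.cycleType + 1 := by
      rw [hd.cycleType_mul, (isCycle_swap hab).cycleType]
      simp [Multiset.card_add]
    have hcs : (ρ * Equiv.swap a b).support.card = ρ.support.card + 2 := by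
      rw [hd.card_support_mul, card_support_swap hab]
    unfold cycles; omega
  · obtain ⟨hct, hs⟩ := ct_supp_mul_swap ρ a b hab hb ha
    unfold cycles; omega

lemma range_filter_split {m k : ℕ} (h1 : 1 ≤ m) (hmk : m < k) :
    (List.range k).filter (fun n => decide (1 ≤ n ∧ n < m + 1)) =
    (List.range k).filter (fun n => decide (1 ≤ n ∧ n < m)) ++ [m] := by
  induction k with
  | zero => omega
  | succ k ih =>
    have e3 : ∀ j, j ≤ m → (List.range j).filter (fun n => decide (1 ≤ n ∧ n < m + 1))
        = (List.range j).filter (fun n => decide (1 ≤ n ∧ n < m)) := by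
      intro j hj
      apply List.filter_congr
      intro x hx
      simp only [List.mem_range] at hx
      simp only [decide_eq_decide]
      omega
    rcases Nat.lt_or_ge m k with hk | hk
    · have e1 : decide (1 ≤ k ∧ k < m + 1) = false := by
        simp only [decide_eq_false_iff_not]; omega
      have e2 : decide (1 ≤ k ∧ k < m) = false := by
        simp only [decide_eq_false_iff_not]; omega
      rw [List.range_succ, List.filter_append, List.filter_append, ih hk]
      simp only [List.filter_singleton, e1, e2, cond_false]
      simp
    · have hkm : m = k := by omega
      subst hkm
      have e1 : decide (1 ≤ m ∧ m < m + 1) = true := by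
        simp only [decide_eq_true_eq]; omega
      have e2 : decide (1 ≤ m ∧ m < m) = false := by
        simp only [decide_eq_false_iff_not]; omega
      rw [List.range_succ, List.filter_append, List.filter_append, e3 m le_rfl]
      simp only [List.filter_singleton, e1, e2, cond_false, cond_true]
      simp

lemma finRange_filter_split {m k : ℕ} (h1 : 1 ≤ m) (hmk : m < k) :
    (List.finRange k).filter (fun i : Fin k => decide (1 ≤ i.val ∧ i.val < m + 1)) =
    (List.finRange k).filter (fun i : Fin k => decide (1 ≤ i.val ∧ i.val < m)) ++ [⟨m, hmk⟩] := by
  have hval : Function.Injective (List.map (Fin.val : Fin k → ℕ)) :=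
    List.map_injective_iff.mpr Fin.val_injective
  apply hval
  have key1 : List.map Fin.val ((List.finRange k).filter
      (fun i : Fin k => decide (1 ≤ i.val ∧ i.val < m + 1)))
      = (List.range k).filter (fun n => decide (1 ≤ n ∧ n < m + 1)) := by
    rw [← (List.ext_getElem (by simp) (by simp) : (List.finRange k).map Fin.val = List.range k), List.filter_map]
    rfl
  have key2 : List.map Fin.val ((List.finRange k).filter
      (fun i : Fin k => decide (1 ≤ i.val ∧ i.val < m)))
      = (List.range k).filter (fun n => decide (1 ≤ n ∧ n < m)) := by
    rw [← (List.ext_getElem (by simp) (by simp) : (List.finRange k).map Fin.val = List.range k), List.filter_map]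
    rfl
  rw [List.map_append, key1, key2, range_filter_split h1 hmk]
  simp

lemma supp_card_le {k m : ℕ} (hm1 : 1 ≤ m) {ρ : Perm (Fin k)}
    (h : ∀ x : Fin k, m ≤ x.val → ρ x = x) : ρ.support.card ≤ m := by
  have hlt : ∀ x : Fin k, x ∈ ρ.support → x.val < m := by
    intro x hx
    by_contra hge
    exact (mem_support.mp hx) (h x (by omega))
  calc ρ.support.card ≤ (Finset.univ : Finset (Fin m)).card := by
        apply Finset.card_le_card_of_injOn
          (fun x => if hx : x.val < m then (⟨x.val, hx⟩ : Fin m) else ⟨0, by omega⟩)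
        · intro a _; exact Finset.mem_univ _
        · intro a ha b hb hab
          simp only [dif_pos (hlt a ha), dif_pos (hlt b hb)] at hab
          apply Fin.ext
          simpa using congrArg Fin.val hab
    _ = m := by simp

lemma cycles_ge {k m : ℕ} (hm1 : 1 ≤ m) (hmk : m ≤ k) {ρ : Perm (Fin k)}
    (h : ∀ x : Fin k, m ≤ x.val → ρ x = x) : k - m ≤ cycles ρ := by
  have := supp_card_le hm1 h
  unfold cycles
  omega

lemma main_claim (k : ℕ) (d : ℚ) : ∀ m, 1 ≤ m → m ≤ k →
    algebraMap ℚ (MonoidAlgebra ℚ (Equiv.Perm (Fin k))) d *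
      (((List.finRange k).filter (fun i : Fin k => decide (1 ≤ i.val ∧ i.val < m))).map
        (fun i => algebraMap ℚ (MonoidAlgebra ℚ (Equiv.Perm (Fin k))) d + JM k i)).prod
    = ∑ ρ ∈ Finset.univ.filter
        (fun ρ : Equiv.Perm (Fin k) => ∀ x : Fin k, m ≤ x.val → ρ x = x),
        d ^ (cycles ρ - (k - m)) • MonoidAlgebra.of ℚ (Equiv.Perm (Fin k)) ρ := by
  intro m hm1
  induction m, hm1 using Nat.le_induction with
  | base =>
    intro hk
    have hnil : (List.finRange k).filter
        (fun i : Fin k => decide (1 ≤ i.val ∧ i.val < 1)) = [] := by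
      apply List.filter_eq_nil_iff.mpr
      intro i _
      simp only [decide_eq_true_eq, not_and]
      omega
    have hF : Finset.univ.filter
        (fun ρ : Equiv.Perm (Fin k) => ∀ x : Fin k, 1 ≤ x.val → ρ x = x) = {1} := by
      ext ρ
      simp only [Finset.mem_filter, Finset.mem_univ, true_and, Finset.mem_singleton]
      constructor
      · intro h
        apply Equiv.ext
        intro x
        rw [Perm.one_apply]
        by_cases hx : 1 ≤ x.val
        · exact h x hx
        · by_cases hy : 1 ≤ (ρ x).val
          · exact ρ.injective (h (ρ x) hy)
          · exact (Fin.ext (by omega) : ρ x = x)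
      · intro h; subst h; simp
    rw [hnil, hF]
    simp only [List.map_nil, List.prod_nil, mul_one, Finset.sum_singleton]
    have hc1 : cycles (1 : Perm (Fin k)) = k := by unfold cycles; simp
    have he : cycles (1 : Perm (Fin k)) - (k - 1) = 1 := by omega
    rw [he, map_one, pow_one, Algebra.algebraMap_eq_smul_one]
  | succ m hm ih =>
    intro hm1k
    have hmk : m < k := by omega
    have ihm := ih (by omega)
    set A := algebraMap ℚ (MonoidAlgebra ℚ (Equiv.Perm (Fin k))) with hA
    set Of := MonoidAlgebra.of ℚ (Equiv.Perm (Fin k)) with hOf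
    set am : Fin k := ⟨m, hmk⟩ with ham
    rw [finRange_filter_split hm hmk, List.map_append, List.prod_append,
      List.map_singleton, List.prod_singleton, ← mul_assoc, ihm]
    set Fm := Finset.univ.filter
      (fun ρ : Equiv.Perm (Fin k) => ∀ x : Fin k, m ≤ x.val → ρ x = x) with hFm
    set Fm1 := Finset.univ.filter
      (fun ρ : Equiv.Perm (Fin k) => ∀ x : Fin k, m + 1 ≤ x.val → ρ x = x) with hFm1
    -- facts about members
    have hmemFm : ∀ ρ ∈ Fm, ∀ x : Fin k, m ≤ x.val → ρ x = x := by
      intro ρ hρ; exact (Finset.mem_filter.mp hρ).2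
    have hmemFm1 : ∀ ρ ∈ Fm1, ∀ x : Fin k, m + 1 ≤ x.val → ρ x = x := by
      intro ρ hρ; exact (Finset.mem_filter.mp hρ).2
    -- split RHS
    rw [← Finset.sum_filter_add_sum_filter_not Fm1 (fun ρ => ρ am = am)]
    -- the fixed part equals Fm
    have hFfix : Fm1.filter (fun ρ => ρ am = am) = Fm := by
      ext ρ
      simp only [hFm, hFm1, Finset.mem_filter, Finset.mem_univ, true_and]
      constructor
      · rintro ⟨h1, h2⟩ x hx
        rcases Nat.lt_or_ge x.val (m + 1) with h | h
        · have : x = am := Fin.ext (by simp [ham]; omega)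
          rw [this]; exact h2
        · exact h1 x h
      · intro h
        exact ⟨fun x hx => h x (by omega), h am (by simp [ham])⟩
    rw [hFfix]
    -- expand the product
    rw [Finset.sum_mul]
    have expand : ∀ ρ ∈ Fm,
        (d ^ (cycles ρ - (k - m)) • Of ρ) * (A d + JM k am)
        = d ^ (cycles ρ - (k - (m + 1))) • Of ρ
          + ∑ j ∈ Finset.univ.filter (fun j : Fin k => j < am),
              d ^ (cycles ρ - (k - m)) • Of (ρ * Equiv.swap j am) := by
      intro ρ hρ
      have hsupp := supp_card_le hm (hmemFm ρ hρ)
      have hexp : cycles ρ - (k - (m + 1)) = (cycles ρ - (k - m)) + 1 := by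
        unfold cycles at *
        omega
      rw [mul_add]
      congr 1
      · rw [smul_mul_assoc, ← Algebra.commutes d (Of ρ), ← Algebra.smul_def,
          smul_smul, hexp, pow_succ, mul_comm]
      · rw [JM, Finset.mul_sum]
        apply Finset.sum_congr rfl
        intro j hj
        rw [smul_mul_assoc, ← map_mul]
    rw [Finset.sum_congr rfl expand, Finset.sum_add_distrib]
    congr 1
    -- moving part: bijection
    rw [← Finset.sum_product']
    have hamv : (am : Fin k).val = m := rfl
    have hmoved : ∀ ρ ∈ Fm, ∀ j : Fin k, j < am →
        (ρ * Equiv.swap j am ∈ Fm1 ∧ ¬(ρ * Equiv.swap j am) am = am) := by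
      intro ρ hρ j hj
      have hjm : j.val < m := hj
      have hjam : j ≠ am := Fin.ne_of_val_ne (by omega)
      have hρam : ρ am = am := hmemFm ρ hρ am (le_of_eq hamv.symm)
      constructor
      · simp only [hFm1, Finset.mem_filter, Finset.mem_univ, true_and]
        intro x hx
        have hxj : x ≠ j := Fin.ne_of_val_ne (by omega)
        have hxam : x ≠ am := Fin.ne_of_val_ne (by omega)
        rw [mul_apply, Equiv.swap_apply_of_ne_of_ne hxj hxam]
        exact hmemFm ρ hρ x (by omega)
      · rw [mul_apply, Equiv.swap_apply_right]
        intro h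
        exact hjam (ρ.injective (h.trans hρam.symm))
    apply Finset.sum_nbij' (fun p => p.1 * Equiv.swap p.2 am)
      (fun ρ' => (ρ' * Equiv.swap (ρ'⁻¹ am) am, ρ'⁻¹ am))
    · rintro ⟨ρ, j⟩ hp
      simp only [Finset.mem_product, Finset.mem_filter, Finset.mem_univ, true_and] at hp
      obtain ⟨hρ, hj⟩ := hp
      have := hmoved ρ (by simpa [hFm] using hρ) j hj
      simp only [Finset.mem_filter]
      exact ⟨this.1, this.2⟩
    · intro ρ' hρ'
      simp only [Finset.mem_filter, hFm1, Finset.mem_univ, true_and] at hρ'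
      obtain ⟨h1, h2⟩ := hρ'
      have hρj : ρ' (ρ'⁻¹ am) = am := by simp
      have hjam : ρ'⁻¹ am ≠ am := by
        intro h; apply h2; rw [h] at hρj; exact hρj
      have hjval : (ρ'⁻¹ am).val < m := by
        by_contra hge
        push_neg at hge
        rcases Nat.eq_or_lt_of_le hge with he | hl
        · exact hjam (Fin.ext (by omega))
        · have hfix : ρ' (ρ'⁻¹ am) = ρ'⁻¹ am := h1 _ (by omega)
          exact hjam (hfix.symm.trans hρj)
      simp only [Finset.mem_product, Finset.mem_filter, Finset.mem_univ, true_and, hFm]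
      constructor
      · intro x hx
        rcases Nat.lt_or_ge x.val (m + 1) with h | h
        · have hxam : x = am := Fin.ext (by omega)
          rw [hxam, mul_apply, Equiv.swap_apply_right, hρj]
        · have hxj : x ≠ ρ'⁻¹ am := Fin.ne_of_val_ne (by omega)
          have hxam : x ≠ am := Fin.ne_of_val_ne (by omega)
          rw [mul_apply, Equiv.swap_apply_of_ne_of_ne hxj hxam]
          exact h1 x h
      · exact hjval
    · rintro ⟨ρ, j⟩ hp
      simp only [Finset.mem_product, Finset.mem_filter, Finset.mem_univ, true_and] at hp
      obtain ⟨hρ, hj⟩ := hp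
      have hρam : ρ am = am := hmemFm ρ (by simpa [hFm] using hρ) am (le_of_eq hamv.symm)
      have hval : (ρ * Equiv.swap j am) j = am := by
        rw [mul_apply, Equiv.swap_apply_left, hρam]
      have hinv : (ρ * Equiv.swap j am)⁻¹ am = j :=
        Equiv.Perm.inv_eq_iff_eq.mpr hval.symm
      refine Prod.ext ?_ ?_
      · show ρ * Equiv.swap j am * Equiv.swap ((ρ * Equiv.swap j am)⁻¹ am) am = ρ
        rw [hinv, mul_assoc, Equiv.swap_mul_self, mul_one]
      · exact hinv
    · intro ρ' hρ'
      show ρ' * Equiv.swap (ρ'⁻¹ am) am * Equiv.swap (ρ'⁻¹ am) am = ρ'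
      rw [mul_assoc, Equiv.swap_mul_self, mul_one]
    · rintro ⟨ρ, j⟩ hp
      simp only [Finset.mem_product, Finset.mem_filter, Finset.mem_univ, true_and] at hp
      obtain ⟨hρ, hj⟩ := hp
      have hjm : j.val < m := hj
      have hjam : j ≠ am := Fin.ne_of_val_ne (by omega)
      have hρam : ρ am = am := hmemFm ρ (by simpa [hFm] using hρ) am (le_of_eq hamv.symm)
      have hcm := cycles_mul_swap ρ hjam hρam
      have hmm := hmoved ρ (by simpa [hFm] using hρ) j hj
      have hsupp : (ρ * Equiv.swap j am).support.card ≤ m + 1 := by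
        apply supp_card_le (by omega)
        have h1' := hmm.1
        simp only [hFm1, Finset.mem_filter, Finset.mem_univ, true_and] at h1'
        exact h1'
      have hge : k - (m + 1) ≤ cycles (ρ * Equiv.swap j am) := by
        unfold cycles; omega
      have hexp : cycles ρ - (k - m) = cycles (ρ * Equiv.swap j am) - (k - (m + 1)) := by
        omega
      rw [hexp]

/-- Jucys' factorization: `∑_{ρ ∈ S_k} d^{c(ρ)} ρ = d · ∏_{i=2}^{k} (d + J_i)`
in the group algebra `ℚ[S_k]`; the (ordered) product is over the indices `i`
having at least one smaller index, i.e. `i = 2, …, k` in 1-based notation. -/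
theorem jucys_factorization (k : ℕ) (hk : 1 ≤ k) (d : ℚ) :
    ∑ ρ : Equiv.Perm (Fin k),
        d ^ cycles ρ • MonoidAlgebra.of ℚ (Equiv.Perm (Fin k)) ρ
      = algebraMap ℚ (MonoidAlgebra ℚ (Equiv.Perm (Fin k))) d *
        (((List.finRange k).filter (fun i : Fin k => 1 ≤ i.val)).map
          (fun i => algebraMap ℚ (MonoidAlgebra ℚ (Equiv.Perm (Fin k))) d + JM k i)).prod := by
  have h := main_claim k d k hk le_rfl
  have hFk : Finset.univ.filter
      (fun ρ : Equiv.Perm (Fin k) => ∀ x : Fin k, k ≤ x.val → ρ x = x)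
      = Finset.univ := by
    apply Finset.filter_true_of_mem
    intro ρ _ x hx
    exact absurd x.isLt (by omega)
  rw [hFk] at h
  have hlist : (List.finRange k).filter (fun i : Fin k => decide (1 ≤ i.val ∧ i.val < k))
      = (List.finRange k).filter (fun i : Fin k => 1 ≤ i.val) := by
    apply List.filter_congr
    intro x hx
    simp only [decide_eq_decide]
    exact ⟨fun h => h.1, fun h => ⟨h, x.isLt⟩⟩
  rw [hlist] at h
  simp only [Nat.sub_self, Nat.sub_zero] at h
  exact h.symm
end

section
/- The symmetric bilinear form on the group algebra Q[S_k] defined by ⟨σ, τ⟩ := d^{c(στ)} is non-degenerate whenever d ≥ k. -/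
open Equiv Equiv.Perm Finset

set_option linter.unusedVariables false

variable {k : ℕ}

instance (σ : Equiv.Perm (Fin k)) : DecidableEq (Quotient (Equiv.Perm.SameCycle.setoid σ)) :=
  fun q1 q2 => Quotient.recOnSubsingleton₂ q1 q2 fun a b =>
    decidable_of_iff (σ.SameCycle a b)
      (Quotient.eq (r := Equiv.Perm.SameCycle.setoid σ)).symm

instance (σ : Equiv.Perm (Fin k)) : Fintype (Quotient (Equiv.Perm.SameCycle.setoid σ)) :=
  @Quotient.fintype (Fin k) _ (Equiv.Perm.SameCycle.setoid σ)
    (fun a b => inferInstanceAs (Decidable (σ.SameCycle a b)))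

private def clsFun (σ : Equiv.Perm (Fin k)) (i : Fin k) :
    σ.cycleFactorsFinset ⊕ {i : Fin k // σ i = i} :=
  if h : σ i = i then Sum.inr ⟨i, h⟩
  else Sum.inl ⟨σ.cycleOf i,
    Equiv.Perm.cycleOf_mem_cycleFactorsFinset_iff.mpr (Equiv.Perm.mem_support.mpr h)⟩

private lemma clsFun_resp (σ : Equiv.Perm (Fin k)) {a b : Fin k} (hab' : (Equiv.Perm.SameCycle.setoid σ).r a b) :
    clsFun σ a = clsFun σ b := by
  have hab : σ.SameCycle a b := hab'
  have hfix : σ a = a ↔ σ b = b := hab.apply_eq_self_iff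
  unfold clsFun
  by_cases ha : σ a = a
  · have hb : σ b = b := hfix.mp ha
    have : a = b := hab.eq_of_left ha
    subst this; rfl
  · have hb : ¬ σ b = b := fun h => ha (hfix.mpr h)
    rw [dif_neg ha, dif_neg hb]
    simp only [Sum.inl.injEq, Subtype.mk.injEq]
    exact hab.cycleOf_eq

lemma card_quot (σ : Equiv.Perm (Fin k)) :
    Fintype.card (Quotient (Equiv.Perm.SameCycle.setoid σ)) = cycles σ := by
  have hbij : Function.Bijective
      (Quotient.lift (clsFun σ) (fun a b hab => clsFun_resp σ hab)) := by
    constructor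
    · intro q1 q2 h
      induction q1 using Quotient.ind with | _ a =>
      induction q2 using Quotient.ind with | _ b =>
      simp only [Quotient.lift_mk] at h
      unfold clsFun at h
      by_cases ha : σ a = a <;> by_cases hb : σ b = b
      · rw [dif_pos ha, dif_pos hb] at h
        simp only [Sum.inr.injEq, Subtype.mk.injEq] at h
        exact congrArg _ h
      · rw [dif_pos ha, dif_neg hb] at h; exact absurd h (by simp)
      · rw [dif_neg ha, dif_pos hb] at h; exact absurd h (by simp)
      · rw [dif_neg ha, dif_neg hb] at h
        simp only [Sum.inl.injEq, Subtype.mk.injEq] at h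
        have : b ∈ (σ.cycleOf a).support := by
          rw [h]
          exact Equiv.Perm.mem_support_cycleOf_iff.mpr
            ⟨Equiv.Perm.SameCycle.refl σ b, Equiv.Perm.mem_support.mpr hb⟩
        exact Quotient.sound (Equiv.Perm.mem_support_cycleOf_iff.mp this).1
    · intro s
      rcases s with ⟨c, hc⟩ | ⟨i, hi⟩
      · have hc' := Equiv.Perm.mem_cycleFactorsFinset_iff.mp hc
        obtain ⟨a, ha⟩ := hc'.1.nonempty_support
        have haσ : a ∈ σ.support := Equiv.Perm.mem_cycleFactorsFinset_support_le hc ha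
        have hna : ¬ σ a = a := Equiv.Perm.mem_support.mp haσ
        refine ⟨⟦a⟧, ?_⟩
        simp only [Quotient.lift_mk]
        unfold clsFun
        rw [dif_neg hna]
        congr 1
        exact Subtype.ext (Equiv.Perm.cycle_is_cycleOf ha hc).symm
      · refine ⟨⟦i⟧, ?_⟩
        simp only [Quotient.lift_mk]
        unfold clsFun
        rw [dif_pos hi]
  have := Fintype.card_of_bijective hbij
  rw [this, Fintype.card_sum, Fintype.card_coe]
  have h1 : Multiset.card σ.cycleType = σ.cycleFactorsFinset.card := by
    rw [Equiv.Perm.cycleType_def, Multiset.card_map]; rfl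
  have h2 : Fintype.card {i : Fin k // σ i = i} = k - σ.support.card := by
    rw [Fintype.card_subtype]
    have : (Finset.univ.filter fun i : Fin k => σ i = i) = σ.supportᶜ := by
      ext i; simp [Equiv.Perm.mem_support]
    rw [this, Finset.card_compl, Fintype.card_fin]
  rw [h2, cycles, h1]

variable {d : ℕ}

private lemma zpow_fix (σ : Equiv.Perm (Fin k)) {f : Fin k → Fin d} (hf : f ∘ ⇑σ = f) :
    ∀ (n : ℤ) (a : Fin k), f ((σ ^ n) a) = f a := by
  intro n
  induction n using Int.induction_on with
  | zero => simp
  | succ m ih =>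
    intro a
    rw [zpow_add_one, Equiv.Perm.mul_apply, ih (σ a)]
    exact congrFun hf a
  | pred m ih =>
    intro a
    rw [zpow_sub_one, Equiv.Perm.mul_apply, ih (σ⁻¹ a)]
    have := congrFun hf (σ⁻¹ a)
    simpa using this.symm

private lemma card_fixed_fns (σ : Equiv.Perm (Fin k)) :
    Fintype.card {f : Fin k → Fin d // f ∘ ⇑σ = f} = d ^ cycles σ := by
  have e : {f : Fin k → Fin d // f ∘ ⇑σ = f} ≃
      (Quotient (Equiv.Perm.SameCycle.setoid σ) → Fin d) :=
    { toFun := fun fp => Quotient.lift fp.1 (fun a b hab => by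
        obtain ⟨n, hn⟩ := (hab : σ.SameCycle a b)
        rw [← hn]
        exact (zpow_fix σ fp.2 n a).symm)
      invFun := fun g => ⟨fun i => g ⟦i⟧, by
        funext i
        exact congrArg g (Quotient.sound (⟨-1, by simp⟩ : σ.SameCycle (σ i) i))⟩
      left_inv := fun fp => Subtype.ext rfl
      right_inv := fun g => funext fun q => by induction q using Quotient.ind with | _ a => rfl }
  rw [Fintype.card_congr e, Fintype.card_fun, Fintype.card_fin, card_quot]

private lemma sum_indicator (ρ : Equiv.Perm (Fin k)) :
    ∑ f : Fin k → Fin d, (if f ∘ ⇑ρ = f then (1 : ℚ) else 0) = (d : ℚ) ^ cycles ρ := by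
  rw [Finset.sum_boole]
  have : (Finset.univ.filter fun f : Fin k → Fin d => f ∘ ⇑ρ = f).card = d ^ cycles ρ := by
    rw [← card_fixed_fns ρ, Fintype.card_subtype]
  rw [this]
  push_cast
  ring

private lemma comp_iff (f : Fin k → Fin d) (σ τ : Equiv.Perm (Fin k)) :
    f ∘ ⇑(σ * τ⁻¹) = f ↔ f ∘ ⇑σ = f ∘ ⇑τ := by
  constructor <;> intro h
  · have h2 := congrArg (· ∘ ⇑τ) h
    simpa [Function.comp_assoc, ← Equiv.Perm.coe_mul, inv_mul_cancel_right] using h2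
  · have h2 := congrArg (· ∘ ⇑τ⁻¹) h
    simpa [Function.comp_assoc, ← Equiv.Perm.coe_mul, mul_inv_cancel_right, Equiv.Perm.mul_symm, Equiv.Perm.inv_def] using h2

private def Zm (k d : ℕ) (x : MonoidAlgebra ℚ (Equiv.Perm (Fin k))) (f g : Fin k → Fin d) : ℚ :=
  ∑ σ : Equiv.Perm (Fin k), x.coeff σ * (if f ∘ ⇑σ = g then 1 else 0)

/-- The symmetric bilinear form `⟨σ, τ⟩ := d^{c(στ)}` on the group algebra
`ℚ[S_k]` is non-degenerate whenever `d ≥ k`. -/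
theorem form_nondegenerate (k d : ℕ) (hd : k ≤ d) (hdpos : 0 < d)
    (x : MonoidAlgebra ℚ (Equiv.Perm (Fin k)))
    (hx : ∀ τ : Equiv.Perm (Fin k),
      ∑ σ : Equiv.Perm (Fin k), x.coeff σ * (d : ℚ) ^ cycles (σ * τ) = 0) :
    x = 0 := by
  -- Step 1: for every τ, ∑_f Zm f (f ∘ τ) = 0
  have key : ∀ τ : Equiv.Perm (Fin k),
      ∑ f : Fin k → Fin d, Zm k d x f (f ∘ ⇑τ) = 0 := by
    intro τ
    have h2 : ∀ σ : Equiv.Perm (Fin k), (d : ℚ) ^ cycles (σ * τ⁻¹) =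
        ∑ f : Fin k → Fin d, (if f ∘ ⇑σ = f ∘ ⇑τ then (1 : ℚ) else 0) := by
      intro σ
      rw [← sum_indicator (σ * τ⁻¹)]
      exact Finset.sum_congr rfl fun f _ => if_congr (comp_iff f σ τ) rfl rfl
    calc ∑ f : Fin k → Fin d, Zm k d x f (f ∘ ⇑τ)
        = ∑ f : Fin k → Fin d, ∑ σ : Equiv.Perm (Fin k),
            x.coeff σ * (if f ∘ ⇑σ = f ∘ ⇑τ then (1 : ℚ) else 0) := rfl
      _ = ∑ σ : Equiv.Perm (Fin k), ∑ f : Fin k → Fin d,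
            x.coeff σ * (if f ∘ ⇑σ = f ∘ ⇑τ then (1 : ℚ) else 0) := Finset.sum_comm
      _ = ∑ σ : Equiv.Perm (Fin k), x.coeff σ * (d : ℚ) ^ cycles (σ * τ⁻¹) := by
            refine Finset.sum_congr rfl fun σ _ => ?_
            rw [h2 σ, Finset.mul_sum]
      _ = 0 := hx τ⁻¹
  -- Step 2: sum of squares of Zm is zero
  have hsq : ∑ f : Fin k → Fin d, ∑ g : Fin k → Fin d,
      Zm k d x f g * Zm k d x f g = 0 := by
    have step : ∀ f : Fin k → Fin d, ∑ g : Fin k → Fin d, Zm k d x f g * Zm k d x f g =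
        ∑ σ : Equiv.Perm (Fin k), x.coeff σ * Zm k d x f (f ∘ ⇑σ) := by
      intro f
      calc ∑ g : Fin k → Fin d, Zm k d x f g * Zm k d x f g
          = ∑ g : Fin k → Fin d, ∑ σ : Equiv.Perm (Fin k),
              (x.coeff σ * (if f ∘ ⇑σ = g then (1 : ℚ) else 0)) * Zm k d x f g := by
            refine Finset.sum_congr rfl fun g _ => ?_
            rw [show Zm k d x f g * Zm k d x f g =
              (∑ σ : Equiv.Perm (Fin k), x.coeff σ * (if f ∘ ⇑σ = g then (1:ℚ) else 0)) * Zm k d x f g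
              from rfl, Finset.sum_mul]
        _ = ∑ σ : Equiv.Perm (Fin k), ∑ g : Fin k → Fin d,
              (x.coeff σ * (if f ∘ ⇑σ = g then (1 : ℚ) else 0)) * Zm k d x f g := Finset.sum_comm
        _ = ∑ σ : Equiv.Perm (Fin k), x.coeff σ * Zm k d x f (f ∘ ⇑σ) := by
            refine Finset.sum_congr rfl fun σ _ => ?_
            simp only [mul_ite, mul_one, mul_zero, ite_mul, zero_mul]
            rw [Finset.sum_ite_eq]
            simp
    calc ∑ f : Fin k → Fin d, ∑ g : Fin k → Fin d, Zm k d x f g * Zm k d x f g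
        = ∑ f : Fin k → Fin d, ∑ σ : Equiv.Perm (Fin k), x.coeff σ * Zm k d x f (f ∘ ⇑σ) :=
          Finset.sum_congr rfl fun f _ => step f
      _ = ∑ σ : Equiv.Perm (Fin k), ∑ f : Fin k → Fin d, x.coeff σ * Zm k d x f (f ∘ ⇑σ) :=
          Finset.sum_comm
      _ = 0 := by
          refine Finset.sum_eq_zero fun σ _ => ?_
          rw [← Finset.mul_sum, key σ, mul_zero]
  -- Step 3: Zm vanishes
  have hZ0 : ∀ f g : Fin k → Fin d, Zm k d x f g = 0 := by
    have h := (Finset.sum_eq_zero_iff_of_nonneg fun f _ =>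
      Finset.sum_nonneg fun g _ => mul_self_nonneg _).mp hsq
    intro f g
    have h2 := (Finset.sum_eq_zero_iff_of_nonneg fun g _ => mul_self_nonneg _).mp
      (h f (Finset.mem_univ f)) g (Finset.mem_univ g)
    exact mul_self_eq_zero.mp h2
  -- Step 4: injectivity using k ≤ d
  have hxσ : ∀ σ : Equiv.Perm (Fin k), x.coeff σ = 0 := by
    intro σ
    have h := hZ0 (Fin.castLE hd) (Fin.castLE hd ∘ ⇑σ)
    unfold Zm at h
    rw [Finset.sum_eq_single σ] at h
    · simpa using h
    · intro τ _ hτσ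
      rw [if_neg, mul_zero]
      intro hcomp
      apply hτσ
      apply Equiv.ext
      intro i
      exact Fin.castLE_injective hd (congrFun hcomp i)
    · intro hσ; exact absurd (Finset.mem_univ σ) hσ
  exact MonoidAlgebra.ext (Finsupp.ext hxσ)
end

section
/- For d ≥ k, the element P = Σ_{ρ∈S_k} d^{c(ρ)} ρ is invertible in the group algebra Q[S_k]. -/
lemma invariant_of_sameCycle {k d : ℕ} (π : Equiv.Perm (Fin k)) (g : Fin k → Fin d)
    (hg : g ∘ ⇑π = g) {x y : Fin k} (h : π.SameCycle x y) : g x = g y := by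
  have hz : ∀ z, g (π z) = g z := fun z => congrFun hg z
  obtain ⟨n, hn, rfl⟩ := h.exists_pow_eq'
  clear hn
  induction n with
  | zero => simp
  | succ m ih =>
      have : (π ^ (m + 1)) x = π ((π ^ m) x) := by
        rw [pow_succ', Equiv.Perm.mul_apply]
      rw [this, hz]
      exact ih ⟨m, rfl⟩

noncomputable def fixedEquiv {k d : ℕ} (π : Equiv.Perm (Fin k)) :
    {g : Fin k → Fin d // g ∘ ⇑π = g} ≃
      ((π.cycleFactorsFinset → Fin d) × ({x : Fin k // x ∉ π.support} → Fin d)) where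
  toFun g := ⟨fun c => g.1 ((c : Equiv.Perm (Fin k)).support.min'
      (Finset.card_pos.mp (by
        have := (Equiv.Perm.mem_cycleFactorsFinset_iff.mp c.2).1.two_le_card_support
        omega))),
    fun x => g.1 x⟩
  invFun p := ⟨fun x => if h : x ∈ π.support then
      p.1 ⟨π.cycleOf x, Equiv.Perm.cycleOf_mem_cycleFactorsFinset_iff.mpr h⟩
    else p.2 ⟨x, h⟩, by
      funext x
      show _ = _
      by_cases h : x ∈ π.support
      · have h' : π x ∈ π.support := Equiv.Perm.apply_mem_support.mpr h
        simp only [Function.comp_apply, dif_pos h, dif_pos h', Equiv.Perm.cycleOf_self_apply]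
      · have h' : π x = x := Equiv.Perm.notMem_support.mp h
        simp only [Function.comp_apply, h']⟩
  left_inv g := by
    apply Subtype.ext
    funext x
    show (if h : x ∈ π.support then _ else _) = g.1 x
    by_cases h : x ∈ π.support
    · rw [dif_pos h]
      have hm : (π.cycleOf x).support.Nonempty := by
        apply Finset.card_pos.mp
        have := (Equiv.Perm.mem_cycleFactorsFinset_iff.mp
          (Equiv.Perm.cycleOf_mem_cycleFactorsFinset_iff.mpr h)).1.two_le_card_support
        omega
      have hmem := (π.cycleOf x).support.min'_mem hm
      have hsc : π.SameCycle x ((π.cycleOf x).support.min' hm) :=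
        (Equiv.Perm.mem_support_cycleOf_iff.mp hmem).1
      exact (invariant_of_sameCycle π g.1 g.2 hsc).symm
    · rw [dif_neg h]
  right_inv p := by
    refine Prod.ext ?_ ?_
    · funext c
      obtain ⟨c, hc⟩ := c
      have hcyc := (Equiv.Perm.mem_cycleFactorsFinset_iff.mp hc).1
      have hne : c.support.Nonempty := Finset.card_pos.mp (by
        have := hcyc.two_le_card_support; omega)
      set m := c.support.min' hne with hm
      have hmem : m ∈ c.support := c.support.min'_mem hne
      have hms : m ∈ π.support :=
        Equiv.Perm.mem_cycleFactorsFinset_support_le hc hmem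
      show (if h : m ∈ π.support then _ else _) = _
      rw [dif_pos hms]
      exact congrArg p.1 (Subtype.ext (Equiv.Perm.cycle_is_cycleOf hmem hc).symm)
    · funext x
      obtain ⟨x, hx⟩ := x
      show (if h : x ∈ π.support then _ else _) = _
      rw [dif_neg hx]

lemma card_fixed {k : ℕ} (d : ℕ) (π : Equiv.Perm (Fin k)) :
    (Finset.univ.filter fun f : Fin k → Fin d => f ∘ ⇑π = f).card = d ^ cycles π := by
  classical
  rw [← Fintype.card_subtype]
  rw [Fintype.card_congr (fixedEquiv (d := d) π)]
  rw [Fintype.card_prod, Fintype.card_fun, Fintype.card_fun, Fintype.card_coe,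
    Fintype.card_fin]
  have h1 : Fintype.card {x : Fin k // x ∉ π.support} = k - π.support.card := by
    rw [Fintype.card_subtype]
    have : Finset.univ.filter (fun x : Fin k => x ∉ π.support) = Finset.univ \ π.support := by
      ext x; simp
    rw [this, Finset.card_sdiff_of_subset (Finset.subset_univ _), Finset.card_univ, Fintype.card_fin]
  rw [h1]
  have h2 : π.cycleType.card = π.cycleFactorsFinset.card := by
    simp [Equiv.Perm.cycleType]
  rw [cycles, h2, pow_add]
lemma key_inj {k d : ℕ} (hd : k ≤ d) (x : MonoidAlgebra ℚ (Equiv.Perm (Fin k)))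
    (hx : (∑ ρ : Equiv.Perm (Fin k),
      (d : ℚ) ^ cycles ρ • MonoidAlgebra.of ℚ (Equiv.Perm (Fin k)) ρ) * x = 0) : x = 0 := by
  classical
  set P : MonoidAlgebra ℚ (Equiv.Perm (Fin k)) :=
    ∑ ρ : Equiv.Perm (Fin k), (d : ℚ) ^ cycles ρ • MonoidAlgebra.of ℚ (Equiv.Perm (Fin k)) ρ
    with hPdef
  have hP : P = ∑ ρ : Equiv.Perm (Fin k), MonoidAlgebra.single ρ ((d : ℚ) ^ cycles ρ) := by
    rw [hPdef]
    refine Finset.sum_congr rfl fun ρ _ => ?_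
    simp [MonoidAlgebra.of_apply, MonoidAlgebra.smul_single']
  have hPx : ∀ τ : Equiv.Perm (Fin k),
      (P * x).coeff τ = ∑ ρ : Equiv.Perm (Fin k), (d : ℚ) ^ cycles ρ * x.coeff (ρ⁻¹ * τ) := by
    intro τ
    rw [hP, Finset.sum_mul, MonoidAlgebra.coeff_sum, Finset.sum_apply']
    exact Finset.sum_congr rfl fun ρ _ => MonoidAlgebra.coeff_single_mul_apply x _ ρ τ
  have h0 : ∑ τ : Equiv.Perm (Fin k), x.coeff τ * (P * x).coeff τ = 0 := by rw [hx]; simp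
  have hQ : ∑ q : Equiv.Perm (Fin k) × Equiv.Perm (Fin k),
      x.coeff q.1 * x.coeff q.2 * (d : ℚ) ^ cycles (q.1 * q.2⁻¹) = 0 := by
    rw [← h0, Fintype.sum_prod_type]
    refine Finset.sum_congr rfl fun τ _ => ?_
    rw [hPx, Finset.mul_sum]
    refine Fintype.sum_equiv ((Equiv.inv _).trans (Equiv.mulLeft τ)) _ _ fun σ => ?_
    have h1 : (τ * σ⁻¹)⁻¹ * τ = σ := by group
    simp only [Equiv.trans_apply, Equiv.inv_apply, Equiv.coe_mulLeft, h1]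
    ring
  set u : (Fin k → Fin d) → (Fin k → Fin d) → ℚ :=
    fun f g => ∑ ρ : Equiv.Perm (Fin k), x.coeff ρ * (if g = f ∘ ⇑ρ then 1 else 0) with hu
  have hps : ∀ ρ σ : Equiv.Perm (Fin k),
      (∑ f : Fin k → Fin d, ∑ g : Fin k → Fin d,
        (x.coeff ρ * (if g = f ∘ ⇑ρ then (1:ℚ) else 0)) * (x.coeff σ * (if g = f ∘ ⇑σ then 1 else 0)))
      = x.coeff ρ * x.coeff σ * (d : ℚ) ^ cycles (ρ * σ⁻¹) := by
    intro ρ σ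
    have hg : ∀ f : Fin k → Fin d,
        (∑ g : Fin k → Fin d, (x.coeff ρ * (if g = f ∘ ⇑ρ then (1:ℚ) else 0)) *
          (x.coeff σ * (if g = f ∘ ⇑σ then 1 else 0)))
        = x.coeff ρ * x.coeff σ * (if f ∘ ⇑ρ = f ∘ ⇑σ then 1 else 0) := by
      intro f
      have h2 : ∀ g : Fin k → Fin d,
          (x.coeff ρ * (if g = f ∘ ⇑ρ then (1:ℚ) else 0)) * (x.coeff σ * (if g = f ∘ ⇑σ then 1 else 0))
          = if g = f ∘ ⇑ρ then (x.coeff ρ * x.coeff σ * (if g = f ∘ ⇑σ then 1 else 0)) else 0 := by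
        intro g; split_ifs <;> ring
      simp only [h2, Finset.sum_ite_eq', Finset.mem_univ, if_true]
    simp only [hg]
    rw [← Finset.mul_sum]
    congr 1
    have hcond : ∀ f : Fin k → Fin d, (f ∘ ⇑ρ = f ∘ ⇑σ) ↔ f ∘ ⇑(ρ * σ⁻¹) = f := by
      intro f
      constructor
      · intro h; funext y
        have := congrFun h (σ⁻¹ y)
        simpa [Equiv.Perm.mul_apply] using this
      · intro h; funext y
        have := congrFun h (σ y)
        simpa [Equiv.Perm.mul_apply] using this
    simp only [hcond]
    rw [Finset.sum_boole, card_fixed d (ρ * σ⁻¹)]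
    norm_cast
  have hsq : ∑ f : Fin k → Fin d, ∑ g : Fin k → Fin d, (u f g) ^ 2 = 0 := by
    have expand : ∀ f g, (u f g) ^ 2 = ∑ q : Equiv.Perm (Fin k) × Equiv.Perm (Fin k),
        (x.coeff q.1 * (if g = f ∘ ⇑q.1 then (1:ℚ) else 0)) *
          (x.coeff q.2 * (if g = f ∘ ⇑q.2 then 1 else 0)) := by
      intro f g
      rw [sq, hu, Fintype.sum_prod_type, Finset.sum_mul_sum]
    simp only [expand]
    have swap1 : ∀ f : Fin k → Fin d,
        (∑ g : Fin k → Fin d, ∑ q : Equiv.Perm (Fin k) × Equiv.Perm (Fin k),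
          (x.coeff q.1 * (if g = f ∘ ⇑q.1 then (1:ℚ) else 0)) *
            (x.coeff q.2 * (if g = f ∘ ⇑q.2 then 1 else 0)))
        = ∑ q : Equiv.Perm (Fin k) × Equiv.Perm (Fin k), ∑ g : Fin k → Fin d,
          (x.coeff q.1 * (if g = f ∘ ⇑q.1 then (1:ℚ) else 0)) *
            (x.coeff q.2 * (if g = f ∘ ⇑q.2 then 1 else 0)) := fun f => Finset.sum_comm
    simp only [swap1]
    rw [Finset.sum_comm]
    have : ∀ q : Equiv.Perm (Fin k) × Equiv.Perm (Fin k),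
        (∑ f : Fin k → Fin d, ∑ g : Fin k → Fin d,
          (x.coeff q.1 * (if g = f ∘ ⇑q.1 then (1:ℚ) else 0)) *
            (x.coeff q.2 * (if g = f ∘ ⇑q.2 then 1 else 0)))
        = x.coeff q.1 * x.coeff q.2 * (d : ℚ) ^ cycles (q.1 * q.2⁻¹) := fun q => hps q.1 q.2
    simp only [this]
    exact hQ
  have hu0 : ∀ f g, u f g = 0 := by
    intro f g
    have h1 := (Finset.sum_eq_zero_iff_of_nonneg (fun f _ =>
      Finset.sum_nonneg fun g _ => sq_nonneg (u f g))).mp hsq f (Finset.mem_univ f)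
    have h2 := (Finset.sum_eq_zero_iff_of_nonneg (fun g _ => sq_nonneg (u f g))).mp h1 g
      (Finset.mem_univ g)
    exact (pow_eq_zero_iff two_ne_zero).mp h2
  have hfin : Function.Injective (Fin.castLE hd) := Fin.castLE_injective hd
  ext ρ₀
  have hval := hu0 (Fin.castLE hd) ((Fin.castLE hd) ∘ ⇑ρ₀)
  rw [hu] at hval
  have hiff : ∀ ρ : Equiv.Perm (Fin k),
      ((Fin.castLE hd) ∘ ⇑ρ₀ = (Fin.castLE hd) ∘ ⇑ρ) ↔ ρ = ρ₀ := by
    intro ρ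
    constructor
    · intro h
      apply Equiv.ext
      intro y
      exact (hfin (congrFun h y)).symm
    · rintro rfl; rfl
  simp only [hiff] at hval
  simpa using hval

/-- For `d ≥ k`, the element `P = ∑_{ρ ∈ S_k} d^{c(ρ)} ρ` is invertible in the
group algebra `ℚ[S_k]`. -/
theorem P_isUnit (k d : ℕ) (hd : k ≤ d) (hdpos : 0 < d) :
    IsUnit (∑ ρ : Equiv.Perm (Fin k),
      (d : ℚ) ^ cycles ρ • MonoidAlgebra.of ℚ (Equiv.Perm (Fin k)) ρ) := by
  classical
  set P : MonoidAlgebra ℚ (Equiv.Perm (Fin k)) :=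
    ∑ ρ : Equiv.Perm (Fin k), (d : ℚ) ^ cycles ρ • MonoidAlgebra.of ℚ (Equiv.Perm (Fin k)) ρ
    with hPdef
  have : FiniteDimensional ℚ (MonoidAlgebra ℚ (Equiv.Perm (Fin k))) :=
    Module.Finite.of_basis (MonoidAlgebra.basis _ ℚ)
  have hinj : Function.Injective (LinearMap.mulLeft ℚ P) := by
    rw [injective_iff_map_eq_zero]
    intro x hx
    exact key_inj hd x hx
  obtain ⟨b, hb⟩ := LinearMap.injective_iff_surjective.mp hinj 1
  have hb' : P * b = 1 := hb
  have h3 : b * P = 1 := by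
    apply hinj
    show P * (b * P) = P * 1
    rw [← mul_assoc, hb', one_mul, mul_one]
  exact ⟨⟨P, b, hb', h3⟩, rfl⟩
end

section
/- Define on the vector space with basis {σ̃ : σ ∈ S_k} the product σ̃_1·σ̃_2 = (σ_1σ_2)~ if |σ_1σ_2| = |σ_1| + |σ_2|, and 0 otherwise, where |σ| = k - c(σ). This product is associative. -/
/-- The degenerate product on `ℚ[S̃_k]`: on basis elements,
`σ̃·τ̃ = (στ)~` if `|στ| = |σ| + |τ|` and `0` otherwise, extended
bilinearly. -/
noncomputable def tmul {k : ℕ} (x y : Equiv.Perm (Fin k) →₀ ℚ) :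
    Equiv.Perm (Fin k) →₀ ℚ :=
  Finsupp.sum x fun σ a => Finsupp.sum y fun τ b =>
    if len (σ * τ) = len σ + len τ then Finsupp.single (σ * τ) (a * b) else 0

namespace TmulAux

open Equiv Equiv.Perm Finset Module

variable {k : ℕ}

/-- Labeling map whose fibers are the orbits of `σ`. -/
noncomputable def F (σ : Perm (Fin k)) (x : Fin k) : Perm (Fin k) ⊕ Fin k :=
  if σ x = x then Sum.inr x else Sum.inl (σ.cycleOf x)

lemma sameCycle_iff_F_eq (σ : Perm (Fin k)) (x y : Fin k) :
    σ.SameCycle x y ↔ F σ x = F σ y := by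
  unfold F
  by_cases hx : σ x = x <;> by_cases hy : σ y = y
  · rw [if_pos hx, if_pos hy]
    simp only [Sum.inr.injEq]
    constructor
    · rintro ⟨n, rfl⟩
      exact (zpow_apply_eq_self_of_apply_eq_self hx n).symm
    · rintro rfl
      exact SameCycle.refl _ _
  · rw [if_pos hx, if_neg hy]
    apply iff_of_false
    · rintro ⟨n, rfl⟩
      exact hy (by rw [zpow_apply_eq_self_of_apply_eq_self hx n]; exact hx)
    · simp
  · rw [if_neg hx, if_pos hy]
    apply iff_of_false
    · intro h
      obtain ⟨n, rfl⟩ := h.symm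
      exact hx (by rw [zpow_apply_eq_self_of_apply_eq_self hy n]; exact hy)
    · simp
  · rw [if_neg hx, if_neg hy]
    simp only [Sum.inl.injEq]
    constructor
    · exact fun h => h.cycleOf_eq
    · intro h
      have hy' : y ∈ (σ.cycleOf y).support := by
        rw [mem_support_cycleOf_iff' hy]
      rw [← h, mem_support_cycleOf_iff' hx] at hy'
      exact hy'

lemma card_classes (σ : Perm (Fin k)) :
    Nat.card (Quotient (SameCycle.setoid σ)) = cycles σ := by
  classical
  have hker : SameCycle.setoid σ = Setoid.ker (F σ) := by
    apply Setoid.ext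
    intro x y
    exact sameCycle_iff_F_eq σ x y
  rw [hker]
  have h1 : Nat.card (Quotient (Setoid.ker (F σ))) = Nat.card (Set.range (F σ)) :=
    Nat.card_congr (Setoid.quotientKerEquivRange (F σ))
  rw [h1]
  have h2 : Set.range (F σ) = ↑(Finset.univ.image (F σ)) := by
    rw [Finset.coe_image, Finset.coe_univ, Set.image_univ]
  rw [h2, Nat.card_coe_set_eq, Set.ncard_coe_finset]
  have h3 : Finset.univ.image (F σ) =
      σ.cycleFactorsFinset.image Sum.inl ∪ σ.supportᶜ.image Sum.inr := by
    ext s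
    simp only [Finset.mem_image, Finset.mem_union, Finset.mem_univ, true_and,
      Finset.mem_compl, Equiv.Perm.mem_support, not_not]
    constructor
    · rintro ⟨x, rfl⟩
      unfold F
      by_cases hx : σ x = x
      · exact Or.inr ⟨x, hx, by simp [hx]⟩
      · refine Or.inl ⟨σ.cycleOf x, ?_, by simp [hx]⟩
        exact cycleOf_mem_cycleFactorsFinset_iff.2 (mem_support.2 hx)
    · rintro (⟨c, hc, rfl⟩ | ⟨x, hx, rfl⟩)
      · have hcyc : c.IsCycle := (mem_cycleFactorsFinset_iff.1 hc).1
        obtain ⟨x, hx⟩ := hcyc.nonempty_support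
        have hxσ : x ∈ σ.support := mem_cycleFactorsFinset_support_le hc hx
        refine ⟨x, ?_⟩
        unfold F
        rw [if_neg (mem_support.1 hxσ), ← cycle_is_cycleOf hx hc]
      · exact ⟨x, by unfold F; rw [if_pos hx]⟩
  rw [h3, Finset.card_union_of_disjoint, Finset.card_image_of_injective _ Sum.inl_injective,
    Finset.card_image_of_injective _ Sum.inr_injective, Finset.card_compl, Fintype.card_fin]
  · congr 1
    simp [cycles, Equiv.Perm.cycleType]
  · simp only [Finset.disjoint_left, Finset.mem_image]
    rintro s ⟨c, _, rfl⟩ ⟨x, _, h⟩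
    cases h

/-- The linear map `f ↦ f ∘ σ - f` on functions `Fin k → ℚ`. -/
noncomputable def Dm (σ : Perm (Fin k)) : (Fin k → ℚ) →ₗ[ℚ] (Fin k → ℚ) :=
  LinearMap.funLeft ℚ ℚ σ - LinearMap.id

lemma Dm_apply (σ : Perm (Fin k)) (f : Fin k → ℚ) (x : Fin k) :
    Dm σ f x = f (σ x) - f x := rfl

lemma mem_ker_Dm {σ : Perm (Fin k)} {f : Fin k → ℚ} :
    f ∈ LinearMap.ker (Dm σ) ↔ ∀ x, f (σ x) = f x := by
  simp only [LinearMap.mem_ker]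
  constructor
  · intro h x
    have := congrFun h x
    rw [Dm_apply] at this
    simpa [sub_eq_zero] using this
  · intro h
    funext x
    simp [Dm_apply, h x]

lemma const_of_mem_ker {σ : Perm (Fin k)} {f : Fin k → ℚ}
    (hf : ∀ x, f (σ x) = f x) {x y : Fin k} (h : σ.SameCycle x y) : f x = f y := by
  obtain ⟨n, rfl⟩ := h
  suffices h' : ∀ (n : ℤ) (z : Fin k), f ((σ ^ n) z) = f z by rw [h']
  intro n
  induction n using Int.induction_on with
  | zero => simp
  | succ m ih =>
      intro z
      have : (σ ^ ((m : ℤ) + 1)) z = (σ ^ (m : ℤ)) (σ z) := by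
        rw [zpow_add_one]; rfl
      rw [this, ih (σ z), hf z]
  | pred m ih =>
      intro z
      have : (σ ^ (-(m : ℤ) - 1)) z = (σ ^ (-(m : ℤ))) (σ⁻¹ z) := by
        rw [sub_eq_add_neg, zpow_add]; simp [zpow_neg_one]
      rw [this, ih (σ⁻¹ z)]
      have h5 := hf (σ⁻¹ z)
      rw [show σ (σ⁻¹ z) = z from σ.apply_symm_apply z] at h5
      exact h5.symm

/-- The kernel of `Dm σ` consists of functions constant on orbits. -/
noncomputable def kerEquiv (σ : Perm (Fin k)) :
    LinearMap.ker (Dm σ) ≃ₗ[ℚ] (Quotient (SameCycle.setoid σ) → ℚ) where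
  toFun f := Quotient.lift f.1 (fun _ _ h => const_of_mem_ker (mem_ker_Dm.1 f.2) h)
  map_add' f g := by funext q; induction q using Quotient.ind; rfl
  map_smul' c f := by funext q; induction q using Quotient.ind; rfl
  invFun g := ⟨fun x => g (Quotient.mk _ x), mem_ker_Dm.2 fun x => by
    congr 1
    exact Quotient.sound (Equiv.Perm.SameCycle.symm ⟨1, by simp⟩)⟩
  left_inv f := by ext x; rfl
  right_inv g := by funext q; induction q using Quotient.ind; rfl

lemma cycles_eq_finrank_ker (σ : Perm (Fin k)) :
    cycles σ = finrank ℚ (LinearMap.ker (Dm σ)) := by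
  classical
  have := Fintype.ofFinite (Quotient (SameCycle.setoid σ))
  rw [(kerEquiv σ).finrank_eq, Module.finrank_fintype_fun_eq_card,
    ← Nat.card_eq_fintype_card, card_classes]

lemma len_eq_finrank_range (σ : Perm (Fin k)) :
    len σ = finrank ℚ (LinearMap.range (Dm σ)) ∧ cycles σ ≤ k := by
  have h := LinearMap.finrank_range_add_finrank_ker (Dm σ)
  rw [Module.finrank_fintype_fun_eq_card, Fintype.card_fin] at h
  rw [← cycles_eq_finrank_ker] at h
  unfold len
  omega

lemma len_mul_le (σ τ : Perm (Fin k)) : len (σ * τ) ≤ len σ + len τ := by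
  obtain ⟨h1, -⟩ := len_eq_finrank_range (σ * τ)
  obtain ⟨h2, -⟩ := len_eq_finrank_range σ
  obtain ⟨h3, -⟩ := len_eq_finrank_range τ
  rw [h1, h2, h3]
  set g₁ : (Fin k → ℚ) →ₗ[ℚ] (Fin k → ℚ) := (LinearMap.funLeft ℚ ℚ τ).comp (Dm σ) with hg₁
  have hdec : Dm (σ * τ) = g₁ + Dm τ := by
    ext f x
    simp [hg₁, Dm_apply, LinearMap.funLeft_apply]
  have hr : LinearMap.range (Dm (σ * τ)) ≤ LinearMap.range g₁ ⊔ LinearMap.range (Dm τ) := by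
    rintro v ⟨f, rfl⟩
    rw [hdec]
    exact Submodule.mem_sup.2 ⟨g₁ f, LinearMap.mem_range_self _ _, Dm τ f,
      LinearMap.mem_range_self _ _, rfl⟩
  calc finrank ℚ (LinearMap.range (Dm (σ * τ)))
      ≤ finrank ℚ (LinearMap.range g₁ ⊔ LinearMap.range (Dm τ) : Submodule ℚ _) :=
        Submodule.finrank_mono hr
    _ ≤ finrank ℚ (LinearMap.range g₁) + finrank ℚ (LinearMap.range (Dm τ)) := by
        have := Submodule.finrank_sup_add_finrank_inf_eq
          (LinearMap.range g₁) (LinearMap.range (Dm τ))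
        omega
    _ ≤ finrank ℚ (LinearMap.range (Dm σ)) + finrank ℚ (LinearMap.range (Dm τ)) := by
        have : LinearMap.range g₁ = Submodule.map (LinearMap.funLeft ℚ ℚ τ)
            (LinearMap.range (Dm σ)) := LinearMap.range_comp _ _
        rw [this]
        exact Nat.add_le_add_right (Submodule.finrank_map_le _ _) _

end TmulAux

open TmulAux in
/-- Subadditivity of the length. -/
lemma len_mul_le' {k : ℕ} (σ τ : Equiv.Perm (Fin k)) : len (σ * τ) ≤ len σ + len τ :=
  len_mul_le σ τ

section FinsuppPart

variable {k : ℕ}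

lemma tmul_single_single (σ τ : Equiv.Perm (Fin k)) (a b : ℚ) :
    tmul (Finsupp.single σ a) (Finsupp.single τ b) =
      if len (σ * τ) = len σ + len τ then Finsupp.single (σ * τ) (a * b) else 0 := by
  unfold tmul
  rw [Finsupp.sum_single_index, Finsupp.sum_single_index]
  · simp
  · rw [Finsupp.sum_single_index] <;> simp

lemma zero_tmul (y : Equiv.Perm (Fin k) →₀ ℚ) : tmul 0 y = 0 := by
  simp [tmul]

lemma tmul_zero (x : Equiv.Perm (Fin k) →₀ ℚ) : tmul x 0 = 0 := by
  simp [tmul]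

lemma add_tmul (x x' y : Equiv.Perm (Fin k) →₀ ℚ) :
    tmul (x + x') y = tmul x y + tmul x' y := by
  unfold tmul
  rw [Finsupp.sum_add_index]
  · intro σ _
    simp
  · intro σ _ a a'
    rw [← Finsupp.sum_add]
    congr 1
    funext τ b
    split <;> simp [add_mul, Finsupp.single_add]

lemma tmul_add (x y y' : Equiv.Perm (Fin k) →₀ ℚ) :
    tmul x (y + y') = tmul x y + tmul x y' := by
  unfold tmul
  rw [← Finsupp.sum_add]
  congr 1
  funext σ a
  rw [Finsupp.sum_add_index]
  · intro τ _
    simp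
  · intro τ _ b b'
    split <;> simp [mul_add, Finsupp.single_add]

end FinsuppPart


lemma tmul_assoc_single {k : ℕ} (σ τ ρ : Equiv.Perm (Fin k)) (a b c : ℚ) :
    tmul (tmul (Finsupp.single σ a) (Finsupp.single τ b)) (Finsupp.single ρ c)
      = tmul (Finsupp.single σ a) (tmul (Finsupp.single τ b) (Finsupp.single ρ c)) := by
  have h3 := len_mul_le' (σ * τ) ρ
  have h4 := len_mul_le' σ (τ * ρ)
  have h1 := len_mul_le' σ τ
  have h2 := len_mul_le' τ ρ
  rw [← mul_assoc] at h4
  have lhs_eq : tmul (tmul (Finsupp.single σ a) (Finsupp.single τ b)) (Finsupp.single ρ c)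
      = if len (σ * τ * ρ) = len σ + len τ + len ρ
        then Finsupp.single (σ * τ * ρ) (a * b * c) else 0 := by
    by_cases p : len (σ * τ) = len σ + len τ
    · rw [tmul_single_single, if_pos p, tmul_single_single, p]
    · rw [tmul_single_single, if_neg p, zero_tmul, if_neg (by omega)]
  have rhs_eq : tmul (Finsupp.single σ a) (tmul (Finsupp.single τ b) (Finsupp.single ρ c))
      = if len (σ * τ * ρ) = len σ + len τ + len ρ
        then Finsupp.single (σ * τ * ρ) (a * b * c) else 0 := by
    by_cases p : len (τ * ρ) = len τ + len ρ
    · rw [tmul_single_single, if_pos p, tmul_single_single]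
      simp only [← mul_assoc]
      rw [p, ← add_assoc]
    · rw [tmul_single_single, if_neg p, tmul_zero, if_neg (by omega)]
  rw [lhs_eq, rhs_eq]

lemma tmul_assoc_aux1 {k : ℕ} (σ τ : Equiv.Perm (Fin k)) (a b : ℚ)
    (z : Equiv.Perm (Fin k) →₀ ℚ) :
    tmul (tmul (Finsupp.single σ a) (Finsupp.single τ b)) z
      = tmul (Finsupp.single σ a) (tmul (Finsupp.single τ b) z) := by
  induction z using Finsupp.induction with
  | zero => rw [tmul_zero, tmul_zero, tmul_zero]
  | single_add ρ c z' _ _ ih =>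
    rw [tmul_add, tmul_add, tmul_add, ih, tmul_assoc_single]

lemma tmul_assoc_aux2 {k : ℕ} (σ : Equiv.Perm (Fin k)) (a : ℚ)
    (y z : Equiv.Perm (Fin k) →₀ ℚ) :
    tmul (tmul (Finsupp.single σ a) y) z
      = tmul (Finsupp.single σ a) (tmul y z) := by
  induction y using Finsupp.induction with
  | zero => rw [tmul_zero, zero_tmul, tmul_zero]
  | single_add τ b y' _ _ ih =>
    rw [tmul_add, add_tmul, add_tmul, tmul_add, ih, tmul_assoc_aux1]

/-- The degenerate product is associative. -/
theorem tmul_assoc {k : ℕ} (x y z : Equiv.Perm (Fin k) →₀ ℚ) :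
    tmul (tmul x y) z = tmul x (tmul y z) := by
  induction x using Finsupp.induction with
  | zero => rw [zero_tmul, zero_tmul, zero_tmul]
  | single_add σ a x' _ _ ih =>
    rw [add_tmul, add_tmul, add_tmul, ih, tmul_assoc_aux2]
end
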